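/- Let {M, I − M} be a dichotomic POVM on ℂ² (M positive semidefinite with I − M positive semidefinite), and let a, b ∈ ℝ³ be unit vectors defining observables A = a·σ and B = b·σ. Then there exists a unit vector r ∈ ℝ³ such that N({M, I−M}, A) ≥ h(|a·r|) and N({M, I−M}, B) ≥ h(|b·r|). -/

import Mathlib

open Matrix
open scoped ComplexOrder

noncomputable section

/-- The binary-entropy-type function `h(x) = -((1+x)/2)·log₂((1+x)/2) - ((1-x)/2)·log₂((1-x)/2)`
(with the convention `0·log₂ 0 = 0`, automatic since `Real.logb 2 0 = 0`). -/
def hFun (x : ℝ) : ℝ :=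
  -(((1 + x) / 2) * Real.logb 2 ((1 + x) / 2)) - ((1 - x) / 2) * Real.logb 2 ((1 - x) / 2)

/-- `g : [0,1] → [0,1]` is the inverse of `h` on `[0,1]`. -/
def gFun : ℝ → ℝ := Function.invFunOn hFun (Set.Icc 0 1)

/-- The (real) quadratic form `⟨v|M|v⟩`. -/
def qform {d : ℕ} (M : Matrix (Fin d) (Fin d) ℂ) (v : Fin d → ℂ) : ℝ :=
  (star v ⬝ᵥ M.mulVec v).re

/-- `v` is an orthonormal basis (family) of `ℂ^d`. -/
def IsONB {d : ℕ} (v : Fin d → Fin d → ℂ) : Prop :=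
  ∀ i j, star (v i) ⬝ᵥ v j = if i = j then 1 else 0

/-- A POVM: a finite family of positive semidefinite matrices summing to the identity. -/
def IsPOVM {d : ℕ} {ι : Type*} [Fintype ι] (M : ι → Matrix (Fin d) (Fin d) ℂ) : Prop :=
  (∀ m, (M m).PosSemidef) ∧ ∑ m, M m = 1

/-- A density matrix: positive semidefinite with trace 1. -/
def IsDensity {d : ℕ} (ρ : Matrix (Fin d) (Fin d) ℂ) : Prop :=
  ρ.PosSemidef ∧ ρ.trace = 1

/-- The noise `N(M,A) = -Σ_{m,a} p(m,a)·log₂(p(m,a)/p(m))` with `p(m,a) = (1/d)·⟨a|M_m|a⟩`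
and `p(m) = (1/d)·Tr[M_m]`, for an observable `A` with orthonormal eigenbasis `v`. -/
def noise {d : ℕ} {ι : Type*} [Fintype ι] (M : ι → Matrix (Fin d) (Fin d) ℂ)
    (v : Fin d → Fin d → ℂ) : ℝ :=
  -∑ m, ∑ a, ((1 / (d : ℝ)) * qform (M m) (v a)) *
      Real.logb 2 (((1 / (d : ℝ)) * qform (M m) (v a)) / ((1 / (d : ℝ)) * (M m).trace.re))

/-- `H(A|ρ) = -Σ_a ⟨a|ρ|a⟩·log₂⟨a|ρ|a⟩` for an observable with orthonormal eigenbasis `v`. -/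
def Hobs {d : ℕ} (v : Fin d → Fin d → ℂ) (ρ : Matrix (Fin d) (Fin d) ℂ) : ℝ :=
  -∑ a, qform ρ (v a) * Real.logb 2 (qform ρ (v a))

/-- Conditional Shannon entropy `H(X|Y) = -Σ_{x,y} p(x,y)·log₂(p(x,y)/p(y))` of a finite joint
distribution, conditioning on the second variable. -/
def condEnt {X Y : Type*} [Fintype X] [Fintype Y] (p : X → Y → ℝ) : ℝ :=
  -∑ x, ∑ y, p x y * Real.logb 2 (p x y / ∑ x', p x' y)

/-- Pauli matrix σ_x. -/
def σx : Matrix (Fin 2) (Fin 2) ℂ := !![0, 1; 1, 0]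
/-- Pauli matrix σ_y. -/
def σy : Matrix (Fin 2) (Fin 2) ℂ := !![0, -Complex.I; Complex.I, 0]
/-- Pauli matrix σ_z. -/
def σz : Matrix (Fin 2) (Fin 2) ℂ := !![1, 0; 0, -1]

/-- `v·σ = v₁σ_x + v₂σ_y + v₃σ_z` for `v ∈ ℝ³`. -/
def vecσ (v : Fin 3 → ℝ) : Matrix (Fin 2) (Fin 2) ℂ :=
  (v 0 : ℂ) • σx + (v 1 : ℂ) • σy + (v 2 : ℂ) • σz

/-- The canonical orthonormal eigenbasis of σ_z. -/
def basisZ : Fin 2 → Fin 2 → ℂ := fun i j => if i = j then 1 else 0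

/-- The canonical orthonormal eigenbasis `|±x⟩` of σ_x. -/
def basisX : Fin 2 → Fin 2 → ℂ := fun i =>
  ![((1 / Real.sqrt 2 : ℝ) : ℂ),
    if i = 0 then ((1 / Real.sqrt 2 : ℝ) : ℂ) else (-(1 / Real.sqrt 2 : ℝ) : ℂ)]

/-- Eigenvalues `+1, -1` of a (nondegenerate) Pauli observable. -/
def pmEig : Fin 2 → ℂ := fun i => if i = 0 then 1 else -1

end

namespace Stmt9Aux

lemma hFun_eq (x : ℝ) : hFun x =
    (Real.negMulLog ((1+x)/2) + Real.negMulLog ((1-x)/2)) / Real.log 2 := by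
  simp [hFun, Real.negMulLog, Real.logb, div_eq_mul_inv]
  ring

lemma hFun_neg (x : ℝ) : hFun (-x) = hFun x := by
  rw [hFun_eq, hFun_eq]; ring_nf

lemma hFun_cont : Continuous hFun := by
  simp only [funext hFun_eq]; fun_prop

lemma hFun_zero : hFun 0 = 1 := by
  have : Real.logb 2 ((1:ℝ) / 2) = -1 := by
    rw [show (1:ℝ)/2 = (2:ℝ)⁻¹ by norm_num, Real.logb_inv,
      Real.logb_self_eq_one (by norm_num)]
  simp only [hFun, add_zero, sub_zero, this]
  norm_num

lemma hFun_hasDeriv {x : ℝ} (hx0 : 0 < x) (hx1 : x < 1) :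
    HasDerivAt hFun (((Real.log ((1-x)/2) - Real.log ((1+x)/2))/2) / Real.log 2) x := by
  have h1 : HasDerivAt (fun x : ℝ => (1+x)/2) (1/2) x := by
    simpa using ((hasDerivAt_id x).const_add 1).div_const 2
  have h2 : HasDerivAt (fun x : ℝ => (1-x)/2) (-(1/2)) x := by
    exact (((hasDerivAt_id' x).const_sub 1).div_const 2).congr_deriv (by ring)
  have hu : ((1+x)/2 : ℝ) ≠ 0 := by positivity
  have hv : ((1-x)/2 : ℝ) ≠ 0 := by
    have : (0:ℝ) < (1-x)/2 := by linarith
    exact this.ne'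
  have d1 := (Real.hasDerivAt_negMulLog hu).comp x h1
  have d2 := (Real.hasDerivAt_negMulLog hv).comp x h2
  have := ((d1.add d2).div_const (Real.log 2))
  have heq : (fun x : ℝ => (Real.negMulLog ((1+x)/2) + Real.negMulLog ((1-x)/2)) / Real.log 2)
      = hFun := by
    funext y; rw [hFun_eq]
  simp only [Function.comp_def, Pi.add_apply] at this
  rw [heq] at this
  exact this.congr_deriv (by ring)

lemma hFun_anti : AntitoneOn hFun (Set.Icc 0 1) := by
  apply antitoneOn_of_deriv_nonpos (convex_Icc 0 1) hFun_cont.continuousOn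
  · intro x hx
    rw [interior_Icc] at hx
    exact (hFun_hasDeriv hx.1 hx.2).differentiableAt.differentiableWithinAt
  · intro x hx
    rw [interior_Icc] at hx
    rw [(hFun_hasDeriv hx.1 hx.2).deriv]
    obtain ⟨hx0, hx1⟩ := hx
    have h1 : Real.log ((1-x)/2) ≤ Real.log ((1+x)/2) :=
      Real.log_le_log (by linarith) (by linarith)
    have h2 : (0:ℝ) < Real.log 2 := Real.log_pos (by norm_num)
    apply div_nonpos_of_nonpos_of_nonneg _ h2.le
    linarith

lemma hFun_abs_le_one {x : ℝ} (h : |x| ≤ 1) : hFun |x| ≤ 1 := by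
  rw [← hFun_zero]
  exact hFun_anti (Set.mem_Icc.2 ⟨le_refl 0, by linarith [abs_nonneg x]⟩)
    (Set.mem_Icc.2 ⟨abs_nonneg x, h⟩) (abs_nonneg x)

lemma hFun_abs (x : ℝ) : hFun |x| = hFun x := by
  rcases abs_cases x with h | h
  · rw [h.1]
  · rw [h.1, hFun_neg]

lemma key_ineq {t τ X : ℝ} (hτ : 0 < τ) (hXτ : |X| ≤ τ) (h1 : τ ≤ t) (h2 : τ ≤ 1 - t) :
    hFun |X/τ| ≤ t * hFun (X/t) + (1-t) * hFun (X/(1-t)) := by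
  have ht : 0 < t := lt_of_lt_of_le hτ h1
  have ht' : 0 < 1 - t := lt_of_lt_of_le hτ h2
  have hτ1 : |X|/τ ≤ 1 := (div_le_one hτ).2 hXτ
  have habs : |X/τ| = |X|/τ := by rw [abs_div, abs_of_pos hτ]
  have step : ∀ s : ℝ, τ ≤ s → hFun (|X|/τ) ≤ hFun (X/s) := by
    intro s hs
    have hs0 : 0 < s := lt_of_lt_of_le hτ hs
    rw [← hFun_abs (X/s), abs_div, abs_of_pos hs0]
    apply hFun_anti (Set.mem_Icc.2 ⟨by positivity, ?_⟩)
      (Set.mem_Icc.2 ⟨by positivity, hτ1⟩)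
    · exact div_le_div_of_nonneg_left (abs_nonneg X) hτ hs
    · calc |X|/s ≤ |X|/τ := div_le_div_of_nonneg_left (abs_nonneg X) hτ hs
        _ ≤ 1 := hτ1
  have s1 := step t h1
  have s2 := step (1-t) h2
  rw [habs]
  nlinarith [s1, s2]

/-- matrix whose columns are the basis vectors -/
def Vmat (v : Fin 2 → Fin 2 → ℂ) : Matrix (Fin 2) (Fin 2) ℂ := Matrix.of fun j i => v i j

lemma Vmat_left {v : Fin 2 → Fin 2 → ℂ} (h : IsONB v) : (Vmat v)ᴴ * Vmat v = 1 := by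
  ext i j
  have := h i j
  simp only [dotProduct, Pi.star_apply] at this
  simp only [Matrix.mul_apply, Matrix.conjTranspose_apply, Vmat, Matrix.of_apply,
    Matrix.one_apply]
  simpa using this

lemma Vmat_right {v : Fin 2 → Fin 2 → ℂ} (h : IsONB v) : Vmat v * (Vmat v)ᴴ = 1 :=
  mul_eq_one_comm.mp (Vmat_left h)

lemma qform_eq {v : Fin 2 → Fin 2 → ℂ} (M : Matrix (Fin 2) (Fin 2) ℂ) (i : Fin 2) :
    qform M (v i) = (((Vmat v)ᴴ * M * Vmat v) i i).re := by
  rw [qform]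
  congr 1
  simp only [Matrix.mul_apply, Matrix.conjTranspose_apply, Vmat, Matrix.of_apply,
    dotProduct, Matrix.mulVec, Pi.star_apply, Finset.mul_sum, Finset.sum_mul]
  rw [Finset.sum_comm]
  apply Finset.sum_congr rfl; intro j _
  apply Finset.sum_congr rfl; intro k _
  ring

lemma qform_sum {v : Fin 2 → Fin 2 → ℂ} (h : IsONB v) (M : Matrix (Fin 2) (Fin 2) ℂ) :
    qform M (v 0) + qform M (v 1) = M.trace.re := by
  rw [qform_eq M 0, qform_eq M 1, ← Complex.add_re]
  congr 1
  have : ((Vmat v)ᴴ * M * Vmat v).trace = M.trace := by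
    rw [Matrix.trace_mul_comm, ← Matrix.mul_assoc, Vmat_right h, Matrix.one_mul]
  rw [← this, Matrix.trace_fin_two]

lemma spectral {a : Fin 3 → ℝ} {v : Fin 2 → Fin 2 → ℂ} (h : IsONB v)
    (heig : ∀ i, (vecσ a).mulVec (v i) = pmEig i • v i) :
    vecσ a = Vmat v * Matrix.diagonal pmEig * (Vmat v)ᴴ := by
  have hVD : vecσ a * Vmat v = Vmat v * Matrix.diagonal pmEig := by
    ext j i
    rw [Matrix.mul_diagonal]
    have := congr_fun (heig i) j
    simp only [Matrix.mulVec, dotProduct, Pi.smul_apply, smul_eq_mul] at this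
    simp only [Matrix.mul_apply, Vmat, Matrix.of_apply]
    rw [this]
    ring
  calc vecσ a = vecσ a * (Vmat v * (Vmat v)ᴴ) := by rw [Vmat_right h, Matrix.mul_one]
    _ = (vecσ a * Vmat v) * (Vmat v)ᴴ := by rw [Matrix.mul_assoc]
    _ = Vmat v * Matrix.diagonal pmEig * (Vmat v)ᴴ := by rw [hVD]

lemma qform_diff {a : Fin 3 → ℝ} {v : Fin 2 → Fin 2 → ℂ} (h : IsONB v)
    (heig : ∀ i, (vecσ a).mulVec (v i) = pmEig i • v i) (M : Matrix (Fin 2) (Fin 2) ℂ) :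
    qform M (v 0) - qform M (v 1) = (M * vecσ a).trace.re := by
  rw [qform_eq M 0, qform_eq M 1, ← Complex.sub_re]
  congr 1
  have key : ((Vmat v)ᴴ * M * Vmat v * Matrix.diagonal pmEig).trace = (M * vecσ a).trace := by
    rw [spectral h heig]
    rw [show (Vmat v)ᴴ * M * Vmat v * Matrix.diagonal pmEig
        = (Vmat v)ᴴ * (M * (Vmat v * Matrix.diagonal pmEig)) by
      simp only [Matrix.mul_assoc]]
    rw [Matrix.trace_mul_comm, Matrix.mul_assoc]
  rw [← key, Matrix.trace_fin_two]
  simp only [Matrix.mul_diagonal, pmEig, if_pos rfl]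
  norm_num
  ring

lemma trace_mul_vecσ (M : Matrix (Fin 2) (Fin 2) ℂ) (hH : Mᴴ = M) (a : Fin 3 → ℝ) :
    (M * vecσ a).trace.re
      = a 0 * (2*(M 1 0).re) + a 1 * (2*(M 1 0).im) + a 2 * ((M 0 0).re - (M 1 1).re) := by
  have h01 : M 0 1 = (starRingEnd ℂ) (M 1 0) := by
    simpa [Matrix.conjTranspose_apply] using (congr_fun (congr_fun hH 0) 1).symm
  rw [Matrix.trace_fin_two]
  simp only [Matrix.mul_apply, Fin.sum_univ_two, vecσ, σx, σy, σz, Matrix.add_apply,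
    Matrix.smul_apply, Matrix.cons_val', Matrix.cons_val_zero, Matrix.cons_val_one,
    Matrix.head_cons, Matrix.head_fin_const, Matrix.empty_val', Matrix.cons_val_fin_one,
    h01, smul_eq_mul]
  simp [Complex.add_re, Complex.mul_re, Complex.mul_im]
  ring

lemma det_re_eq (M : Matrix (Fin 2) (Fin 2) ℂ) (hH : Mᴴ = M) :
    M.det.re = (M 0 0).re*(M 1 1).re - ((M 1 0).re^2+(M 1 0).im^2) := by
  have h01 : M 0 1 = (starRingEnd ℂ) (M 1 0) := by
    simpa [Matrix.conjTranspose_apply] using (congr_fun (congr_fun hH 0) 1).symm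
  have h00 : (M 0 0).im = 0 := by
    have := congr_fun (congr_fun hH 0) 0
    simp only [Matrix.conjTranspose_apply] at this
    exact Complex.conj_eq_iff_im.mp this
  rw [Matrix.det_fin_two, h01]
  simp [Complex.sub_re, Complex.mul_re, h00]
  ring

lemma det_re_nonneg (M : Matrix (Fin 2) (Fin 2) ℂ) (hM : M.PosSemidef) : 0 ≤ M.det.re := by
  have h := hM.1.det_eq_prod_eigenvalues
  have h2 : M.det = ((∏ i, hM.1.eigenvalues i : ℝ) : ℂ) := by rw [h]; push_cast; rfl
  rw [h2, Complex.ofReal_re]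
  exact Finset.prod_nonneg fun i _ => hM.eigenvalues_nonneg i

lemma qform_nonneg {M : Matrix (Fin 2) (Fin 2) ℂ} (hM : M.PosSemidef) (x : Fin 2 → ℂ) :
    0 ≤ qform M x := by
  have := hM.re_dotProduct_nonneg x
  rw [qform]
  simpa [RCLike.re_to_complex] using this

lemma qform_one_sub (M : Matrix (Fin 2) (Fin 2) ℂ) {v : Fin 2 → Fin 2 → ℂ} (hv : IsONB v)
    (i : Fin 2) : qform (1 - M) (v i) = 1 - qform M (v i) := by
  have h1 : star (v i) ⬝ᵥ v i = 1 := by simpa using hv i i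
  rw [qform, Matrix.sub_mulVec, Matrix.one_mulVec, dotProduct_sub, h1]
  simp [qform]

lemma noise_expand (M : Matrix (Fin 2) (Fin 2) ℂ) {v : Fin 2 → Fin 2 → ℂ} (hv : IsONB v)
    (t X : ℝ) (hT : M.trace.re = 2*t)
    (hs0 : qform M (v 0) = t + X) (hs1 : qform M (v 1) = t - X) :
    noise ![M, 1-M] v =
      -((1/2*(t+X)) * Real.logb 2 ((1/2*(t+X))/(1/2*(2*t)))
        + (1/2*(t-X)) * Real.logb 2 ((1/2*(t-X))/(1/2*(2*t)))
        + (1/2*(1-t-X)) * Real.logb 2 ((1/2*(1-t-X))/(1/2*(2-2*t)))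
        + (1/2*(1-t+X)) * Real.logb 2 ((1/2*(1-t+X))/(1/2*(2-2*t)))) := by
  have hT' : (1-M).trace.re = 2 - 2*t := by
    rw [Matrix.trace_sub, Matrix.trace_one]; simp [hT]
  rw [noise]
  simp only [Fin.sum_univ_two, Matrix.cons_val_zero, Matrix.cons_val_one, Matrix.head_cons,
    qform_one_sub M hv, hs0, hs1, hT, hT', Nat.cast_ofNat]
  norm_num
  ring_nf

lemma tpart (t X : ℝ) (ht : 0 < t) :
    -((1/2*(t+X)) * Real.logb 2 ((1/2*(t+X))/(1/2*(2*t)))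
      + (1/2*(t-X)) * Real.logb 2 ((1/2*(t-X))/(1/2*(2*t)))) = t * hFun (X/t) := by
  have ht' : t ≠ 0 := ht.ne'
  have e1 : (1/2*(t+X))/(1/2*(2*t)) = (1 + X/t)/2 := by
    rw [div_eq_div_iff (by positivity) (by norm_num)]
    field_simp
  have e2 : (1/2*(t-X))/(1/2*(2*t)) = (1 - X/t)/2 := by
    rw [div_eq_div_iff (by positivity) (by norm_num)]
    field_simp
  rw [e1, e2, hFun]
  field_simp
  ring

lemma tpart' (t X : ℝ) (ht : t < 1) :
    -((1/2*(1-t-X)) * Real.logb 2 ((1/2*(1-t-X))/(1/2*(2-2*t)))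
      + (1/2*(1-t+X)) * Real.logb 2 ((1/2*(1-t+X))/(1/2*(2-2*t)))) = (1-t) * hFun (X/(1-t)) := by
  have h := tpart (1-t) X (by linarith)
  rw [show (2-2*t : ℝ) = 2*(1-t) by ring]
  linarith [h]

lemma tpart_zero (t : ℝ) (ht : 0 ≤ t) :
    -((1/2*(t+0)) * Real.logb 2 ((1/2*(t+0))/(1/2*(2*t)))
      + (1/2*(t-0)) * Real.logb 2 ((1/2*(t-0))/(1/2*(2*t)))) = t := by
  rcases eq_or_lt_of_le ht with h | h
  · simp [← h]
  · have e : (1/2*(t+0))/(1/2*(2*t)) = 1/2 := by field_simp; ring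
    rw [show (1/2*(t-0) : ℝ) = 1/2*(t+0) by ring, e]
    have e2 : Real.logb 2 (1/2 : ℝ) = -1 := by
      rw [show (1:ℝ)/2 = (2:ℝ)⁻¹ by norm_num, Real.logb_inv,
        Real.logb_self_eq_one (by norm_num)]
    rw [e2]
    ring

lemma tpart'_zero (t : ℝ) (ht : t ≤ 1) :
    -((1/2*(1-t-0)) * Real.logb 2 ((1/2*(1-t-0))/(1/2*(2-2*t)))
      + (1/2*(1-t+0)) * Real.logb 2 ((1/2*(1-t+0))/(1/2*(2-2*t)))) = 1 - t := by
  have h := tpart_zero (1-t) (by linarith)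
  rw [show (2-2*t : ℝ) = 2*(1-t) by ring]
  linarith [h]

lemma abs_head_le_one {c : Fin 3 → ℝ} (hc : ∑ i, c i ^ 2 = 1) : hFun |c 0| ≤ 1 := by
  have hc0 : c 0 ^ 2 ≤ 1 := by
    rw [Fin.sum_univ_three] at hc
    nlinarith [sq_nonneg (c 1), sq_nonneg (c 2)]
  have : |c 0| ≤ 1 := by
    nlinarith [sq_abs (c 0), abs_nonneg (c 0)]
  exact hFun_abs_le_one this

end Stmt9Aux

open Stmt9Aux in
/-- For a dichotomic POVM `{M, I−M}` and Pauli observables `A = a·σ`, `B = b·σ`, there is a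
unit vector `r` with `N({M,I−M},A) ≥ h(|a·r|)` and `N({M,I−M},B) ≥ h(|b·r|)`. -/
theorem stmt_9 (M : Matrix (Fin 2) (Fin 2) ℂ) (hM : M.PosSemidef)
    (hM' : (1 - M).PosSemidef)
    (a b : Fin 3 → ℝ) (ha : ∑ i, a i ^ 2 = 1) (hb : ∑ i, b i ^ 2 = 1)
    (vA vB : Fin 2 → Fin 2 → ℂ) (hA : IsONB vA) (hB : IsONB vB)
    (hAeig : ∀ i, (vecσ a).mulVec (vA i) = pmEig i • vA i)
    (hBeig : ∀ i, (vecσ b).mulVec (vB i) = pmEig i • vB i) :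
    ∃ r : Fin 3 → ℝ, (∑ i, r i ^ 2 = 1) ∧
      hFun |∑ i, a i * r i| ≤ noise ![M, 1 - M] vA ∧
      hFun |∑ i, b i * r i| ≤ noise ![M, 1 - M] vB := by
  classical
  have hH : Mᴴ = M := hM.1
  set w : Fin 3 → ℝ := ![(M 1 0).re, (M 1 0).im, ((M 0 0).re - (M 1 1).re)/2] with hw
  set t : ℝ := M.trace.re / 2 with htdef
  have htr : M.trace.re = (M 0 0).re + (M 1 1).re := by
    rw [Matrix.trace_fin_two]; simp
  have hTt : M.trace.re = 2 * t := by rw [htdef]; ring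
  have hw0 : w 0 = (M 1 0).re := rfl
  have hw1 : w 1 = (M 1 0).im := rfl
  have hw2 : w 2 = ((M 0 0).re - (M 1 1).re)/2 := rfl
  have hdet1 : 0 ≤ t^2 - (w 0^2 + w 1^2 + w 2^2) := by
    have h1 := det_re_nonneg M hM
    have h2 := det_re_eq M hH
    rw [hw0, hw1, hw2, htdef, htr]
    nlinarith [h1, h2]
  have hdet2 : 0 ≤ (1-t)^2 - (w 0^2 + w 1^2 + w 2^2) := by
    have hH' : (1-M)ᴴ = 1 - M := hM'.1
    have h1 := det_re_nonneg _ hM'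
    have h2 := det_re_eq _ hH'
    have e10 : ((1-M) 1 0) = -(M 1 0) := by
      simp [Matrix.sub_apply, Matrix.one_apply]
    have e00 : ((1-M) 0 0) = 1 - M 0 0 := by
      simp [Matrix.sub_apply, Matrix.one_apply]
    have e11 : ((1-M) 1 1) = 1 - M 1 1 := by
      simp [Matrix.sub_apply, Matrix.one_apply]
    rw [e10, e00, e11] at h2
    simp only [Complex.neg_re, Complex.neg_im, Complex.sub_re, Complex.one_re] at h2
    rw [hw0, hw1, hw2, htdef, htr]
    nlinarith [h1, h2]
  have hqs : ∀ (c : Fin 3 → ℝ) (v : Fin 2 → Fin 2 → ℂ), IsONB v →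
      (∀ i, (vecσ c).mulVec (v i) = pmEig i • v i) →
      qform M (v 0) = t + (∑ i, c i * w i) ∧ qform M (v 1) = t - (∑ i, c i * w i) := by
    intro c v hv heig
    have h1 := qform_sum hv M
    have h2 := qform_diff hv heig M
    have h3 := trace_mul_vecσ M hH c
    rw [h3] at h2
    rw [Fin.sum_univ_three, hw0, hw1, hw2]
    constructor <;> linarith [h1, h2, hTt]
  obtain ⟨hsA0, hsA1⟩ := hqs a vA hA hAeig
  obtain ⟨hsB0, hsB1⟩ := hqs b vB hB hBeig
  set XA : ℝ := ∑ i, a i * w i with hXA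
  set XB : ℝ := ∑ i, b i * w i with hXB
  have ht0 : 0 ≤ t := by
    have h1 := qform_nonneg hM (vA 0)
    have h2 := qform_nonneg hM (vA 1)
    rw [hsA0] at h1; rw [hsA1] at h2
    linarith
  have ht1 : t ≤ 1 := by
    have h1 := qform_nonneg hM' (vA 0)
    have h2 := qform_nonneg hM' (vA 1)
    rw [qform_one_sub M hA 0, hsA0] at h1
    rw [qform_one_sub M hA 1, hsA1] at h2
    linarith
  have hsum3 : (∑ i, w i ^ 2) = w 0^2 + w 1^2 + w 2^2 := Fin.sum_univ_three _
  by_cases hτ : (∑ i, w i ^ 2) = 0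
  · -- degenerate case : w = 0
    have hwz : ∀ i, w i = 0 := by
      intro i
      have := (Finset.sum_eq_zero_iff_of_nonneg (fun j _ => sq_nonneg (w j))).1 hτ i
        (Finset.mem_univ i)
      exact (pow_eq_zero_iff (n := 2) (by norm_num)).1 this
    have hXA0 : XA = 0 := by
      rw [hXA]; apply Finset.sum_eq_zero; intro i _; rw [hwz i]; ring
    have hXB0 : XB = 0 := by
      rw [hXB]; apply Finset.sum_eq_zero; intro i _; rw [hwz i]; ring
    have hnoise : ∀ (v : Fin 2 → Fin 2 → ℂ), IsONB v →
        qform M (v 0) = t + 0 → qform M (v 1) = t - 0 → noise ![M, 1-M] v = 1 := by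
      intro v hv h0 h1
      rw [noise_expand M hv t 0 hTt h0 h1]
      have e1 := tpart_zero t ht0
      have e2 := tpart'_zero t ht1
      linarith [e1, e2]
    refine ⟨![1, 0, 0], by simp [Fin.sum_univ_three], ?_, ?_⟩
    · have hs : (∑ i, a i * (![1, 0, 0] : Fin 3 → ℝ) i) = a 0 := by
        simp [Fin.sum_univ_three]
      rw [hs, hnoise vA hA (by rw [hsA0, hXA0]) (by rw [hsA1, hXA0])]
      exact abs_head_le_one ha
    · have hs : (∑ i, b i * (![1, 0, 0] : Fin 3 → ℝ) i) = b 0 := by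
        simp [Fin.sum_univ_three]
      rw [hs, hnoise vB hB (by rw [hsB0, hXB0]) (by rw [hsB1, hXB0])]
      exact abs_head_le_one hb
  · -- main case
    have hτpos : 0 < (∑ i, w i ^ 2) := lt_of_le_of_ne (by positivity) (Ne.symm hτ)
    set τ : ℝ := Real.sqrt (∑ i, w i ^ 2) with hτdef
    have hτsq : τ^2 = ∑ i, w i ^ 2 := Real.sq_sqrt (by positivity)
    have hτp : 0 < τ := Real.sqrt_pos.2 hτpos
    have hτt : τ ≤ t := by
      have h := Real.sqrt_le_sqrt (show (∑ i, w i ^ 2) ≤ t^2 by rw [hsum3]; linarith [hdet1])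
      rwa [Real.sqrt_sq ht0] at h
    have hτt' : τ ≤ 1 - t := by
      have h := Real.sqrt_le_sqrt
        (show (∑ i, w i ^ 2) ≤ (1-t)^2 by rw [hsum3]; linarith [hdet2])
      rwa [Real.sqrt_sq (by linarith)] at h
    have hCS : ∀ c : Fin 3 → ℝ, (∑ i, c i ^ 2 = 1) → |∑ i, c i * w i| ≤ τ := by
      intro c hc
      have h := Finset.sum_mul_sq_le_sq_mul_sq Finset.univ c w
      rw [hc, one_mul] at h
      have habs : |∑ i, c i * w i| = Real.sqrt ((∑ i, c i * w i)^2) :=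
        (Real.sqrt_sq_eq_abs _).symm
      rw [habs, hτdef]
      exact Real.sqrt_le_sqrt h
    refine ⟨fun i => w i / τ, ?_, ?_, ?_⟩
    · have e : (∑ i, (w i / τ)^2) = (∑ i, w i ^ 2)/τ^2 := by
        rw [Finset.sum_div]
        exact Finset.sum_congr rfl fun i _ => div_pow (w i) τ 2
      rw [e, ← hτsq, div_self (by positivity)]
    · have hs : (∑ i, a i * (w i / τ)) = XA / τ := by
        rw [hXA, Finset.sum_div]
        exact Finset.sum_congr rfl fun i _ => (mul_div_assoc _ _ _).symm
      rw [hs, noise_expand M hA t XA hTt hsA0 hsA1]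
      have e1 := tpart t XA (lt_of_lt_of_le hτp hτt)
      have e2 := tpart' t XA (by linarith)
      have hk := key_ineq hτp (hCS a ha) hτt hτt'
      linarith [e1, e2, hk]
    · have hs : (∑ i, b i * (w i / τ)) = XB / τ := by
        rw [hXB, Finset.sum_div]
        exact Finset.sum_congr rfl fun i _ => (mul_div_assoc _ _ _).symm
      rw [hs, noise_expand M hB t XB hTt hsB0 hsB1]
      have e1 := tpart t XB (lt_of_lt_of_le hτp hτt)
      have e2 := tpart' t XB (by linarith)
      have hk := key_ineq hτp (hCS b hb) hτt hτt'
      linarith [e1, e2, hk]
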